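/- arXiv:2010.08936 — 2 statements merged into one kernel-verified Lean document; each statement's English description precedes it below -/
import Mathlib

section
/- Cycle-free property: if H1,...,Hr are pairwise edge-disjoint minimal densest subgraphs of G, then the number of vertices lying in at least two of the subgraphs H1,...,Hr is strictly less than r. -/
open scoped BigOperators

variable {V : Type*}

/-- Density of a subgraph: m(H)/(n(H)-1). -/
noncomputable def density (G : SimpleGraph V) (H : G.Subgraph) : ℝ :=
  (H.edgeSet.ncard : ℝ) / ((H.verts.ncard : ℝ) - 1)

/-- Fractional arboricity: maximum density over connected subgraphs. -/
noncomputable def fracArboricity (G : SimpleGraph V) : ℝ :=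
  sSup {d : ℝ | ∃ H : G.Subgraph, H.Connected ∧ d = density G H}

/-- A densest subgraph: connected, attaining the maximum density. -/
def IsDensest (G : SimpleGraph V) (H : G.Subgraph) : Prop :=
  H.Connected ∧ density G H = fracArboricity G

/-- A minimal densest subgraph: no proper subgraph is densest. -/
def IsMinimalDensest (G : SimpleGraph V) (H : G.Subgraph) : Prop :=
  IsDensest G H ∧ ∀ K : G.Subgraph, K < H → ¬ IsDensest G K

lemma density_le_card [Fintype V] (G : SimpleGraph V) (H : G.Subgraph) :
    density G H ≤ (Fintype.card (Sym2 V) : ℝ) := by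
  classical
  unfold density
  rcases le_or_gt ((H.verts.ncard : ℝ) - 1) 0 with h | h
  · calc (H.edgeSet.ncard : ℝ) / ((H.verts.ncard : ℝ) - 1) ≤ 0 := by
          rcases eq_or_lt_of_le h with h0 | h0
          · rw [h0, div_zero]
          · exact div_nonpos_iff.2 (Or.inl ⟨by positivity, h0.le⟩)
       _ ≤ _ := by positivity
  · have h1 : (1 : ℝ) ≤ (H.verts.ncard : ℝ) - 1 := by
      have : 2 ≤ H.verts.ncard := by
        by_contra hc
        push_neg at hc
        interval_cases hn : H.verts.ncard <;> simp_all <;> linarith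
      have : (2 : ℝ) ≤ (H.verts.ncard : ℝ) := by exact_mod_cast this
      linarith
    have hm : (H.edgeSet.ncard : ℝ) ≤ (Fintype.card (Sym2 V) : ℝ) := by
      have := Set.ncard_le_ncard (Set.subset_univ H.edgeSet) (Set.finite_univ)
      rw [Set.ncard_univ, Nat.card_eq_fintype_card] at this
      exact_mod_cast this
    calc (H.edgeSet.ncard : ℝ) / ((H.verts.ncard : ℝ) - 1)
        ≤ (H.edgeSet.ncard : ℝ) / 1 := by
          apply div_le_div_of_nonneg_left _ one_pos h1 <;> positivity
      _ ≤ _ := by rw [div_one]; exact hm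

lemma bddAbove_density_set [Fintype V] (G : SimpleGraph V) :
    BddAbove {d : ℝ | ∃ H : G.Subgraph, H.Connected ∧ d = density G H} := by
  refine ⟨(Fintype.card (Sym2 V) : ℝ), ?_⟩
  rintro d ⟨H, -, rfl⟩
  exact density_le_card G H

lemma density_le_fracArboricity [Fintype V] (G : SimpleGraph V) {H : G.Subgraph}
    (hH : H.Connected) : density G H ≤ fracArboricity G :=
  le_csSup (bddAbove_density_set G) ⟨H, hH, rfl⟩

lemma one_le_fracArboricity [Fintype V] (G : SimpleGraph V) {v w : V} (h : G.Adj v w) :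
    1 ≤ fracArboricity G := by
  have hc := SimpleGraph.Subgraph.subgraphOfAdj_connected h
  have hd : density G (G.subgraphOfAdj h) = 1 := by
    unfold density
    rw [SimpleGraph.edgeSet_subgraphOfAdj]
    have hv : (G.subgraphOfAdj h).verts = {v, w} := rfl
    rw [hv, Set.ncard_singleton, Set.ncard_pair h.ne]
    norm_num
  have := density_le_fracArboricity G hc
  rw [hd] at this
  exact this

lemma densest_facts [Fintype V] (G : SimpleGraph V) (hg : 1 ≤ fracArboricity G)
    {H : G.Subgraph} (hH : IsDensest G H) :
    2 ≤ H.verts.ncard ∧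
      (H.edgeSet.ncard : ℝ) = fracArboricity G * ((H.verts.ncard : ℝ) - 1) := by
  classical
  have hne : H.verts.Nonempty := hH.1.nonempty
  have h1 : 1 ≤ H.verts.ncard := by
    rw [Nat.one_le_iff_ne_zero, Ne, Set.ncard_eq_zero (Set.toFinite _)]
    exact hne.ne_empty
  have h2 : 2 ≤ H.verts.ncard := by
    rcases eq_or_lt_of_le h1 with h1' | h1'
    · exfalso
      obtain ⟨x, hx⟩ := (Set.ncard_eq_one).1 h1'.symm
      have hE : H.edgeSet = ∅ := by
        ext e
        refine e.ind (fun a b => ?_)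
        simp only [SimpleGraph.Subgraph.mem_edgeSet, Set.mem_empty_iff_false, iff_false]
        intro hab
        have ha : a ∈ H.verts := H.edge_vert hab
        have hb : b ∈ H.verts := H.edge_vert hab.symm
        rw [hx] at ha hb
        exact hab.ne (ha.trans hb.symm)
      have : density G H = 0 := by
        unfold density
        rw [hE, Set.ncard_empty, ← h1'.symm] at *
        norm_num
      rw [hH.2] at this
      linarith
    · exact h1'
  refine ⟨h2, ?_⟩
  have h2' : (2 : ℝ) ≤ (H.verts.ncard : ℝ) := by exact_mod_cast h2
  have hpos : (0 : ℝ) < (H.verts.ncard : ℝ) - 1 := by linarith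
  have := hH.2
  unfold density at this
  field_simp at this
  linarith [this]

lemma overlap_lemma [Fintype V] (G : SimpleGraph V) (hg : 1 ≤ fracArboricity G)
    {A B : G.Subgraph} (hA : IsDensest G A) (hB : IsDensest G B)
    (hAB : A.edgeSet ∩ B.edgeSet = ∅) (hne : (A.verts ∩ B.verts).Nonempty) :
    (A.verts ∩ B.verts).ncard = 1 ∧ IsDensest G (A ⊔ B) := by
  classical
  set g := fracArboricity G with hgdef
  obtain ⟨hnA, hmA⟩ := densest_facts G hg hA
  obtain ⟨hnB, hmB⟩ := densest_facts G hg hB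
  have hgpos : (0 : ℝ) < g := lt_of_lt_of_le one_pos hg
  -- connectivity of the union
  have hconn : (A ⊔ B).Connected := by
    apply SimpleGraph.Subgraph.connected_sup hA.1.preconnected hB.1.preconnected
    rwa [SimpleGraph.Subgraph.verts_inf]
  -- vertex count of the union
  have hvU : (A ⊔ B).verts = A.verts ∪ B.verts := SimpleGraph.Subgraph.verts_sup A B
  have hcount : (A.verts ∩ B.verts).ncard + (A.verts ∪ B.verts).ncard
      = A.verts.ncard + B.verts.ncard :=
    Set.ncard_inter_add_ncard_union _ _ (Set.toFinite _) (Set.toFinite _)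
  -- edge count of the union
  have heU : (A ⊔ B).edgeSet = A.edgeSet ∪ B.edgeSet := SimpleGraph.Subgraph.edgeSet_sup
  have hecount : (A.edgeSet ∪ B.edgeSet).ncard = A.edgeSet.ncard + B.edgeSet.ncard :=
    Set.ncard_union_eq (Set.disjoint_iff_inter_eq_empty.2 hAB) (Set.toFinite _) (Set.toFinite _)
  set t := (A.verts ∩ B.verts).ncard with htdef
  have ht1 : 1 ≤ t := by
    rw [htdef, Nat.one_le_iff_ne_zero, Ne, Set.ncard_eq_zero (Set.toFinite _)]
    exact hne.ne_empty
  have htle : t ≤ A.verts.ncard := Set.ncard_le_ncard Set.inter_subset_left (Set.toFinite _)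
  -- union has at least 2 vertices
  have hnU : 2 ≤ (A ⊔ B).verts.ncard := by
    rw [hvU]
    exact le_trans hnA (Set.ncard_le_ncard Set.subset_union_left (Set.toFinite _))
  -- real arithmetic
  have hnUr : ((A ⊔ B).verts.ncard : ℝ)
      = (A.verts.ncard : ℝ) + (B.verts.ncard : ℝ) - t := by
    rw [hvU]
    have h' : (t : ℝ) + ((A.verts ∪ B.verts).ncard : ℝ)
        = (A.verts.ncard : ℝ) + (B.verts.ncard : ℝ) := by exact_mod_cast hcount
    linarith
  have hmUr : ((A ⊔ B).edgeSet.ncard : ℝ)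
      = g * ((A.verts.ncard : ℝ) - 1) + g * ((B.verts.ncard : ℝ) - 1) := by
    rw [heU]
    push_cast [hecount]
    rw [hmA, hmB]
  have hle : density G (A ⊔ B) ≤ g := density_le_fracArboricity G hconn
  have hUpos : (0 : ℝ) < ((A ⊔ B).verts.ncard : ℝ) - 1 := by
    have : (2 : ℝ) ≤ ((A ⊔ B).verts.ncard : ℝ) := by exact_mod_cast hnU
    linarith
  have hdU : density G (A ⊔ B)
      = ((A ⊔ B).edgeSet.ncard : ℝ) / (((A ⊔ B).verts.ncard : ℝ) - 1) := rfl
  have hkey : ((A ⊔ B).edgeSet.ncard : ℝ) ≤ g * (((A ⊔ B).verts.ncard : ℝ) - 1) := by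
    rw [hdU, div_le_iff₀ hUpos] at hle
    linarith
  have hAr : (2 : ℝ) ≤ (A.verts.ncard : ℝ) := by exact_mod_cast hnA
  have hBr : (2 : ℝ) ≤ (B.verts.ncard : ℝ) := by exact_mod_cast hnB
  have htr : (1 : ℝ) ≤ (t : ℝ) := by exact_mod_cast ht1
  -- conclude t = 1
  have ht : t = 1 := by
    by_contra hne1
    have ht2 : 2 ≤ t := by omega
    have ht2r : (2 : ℝ) ≤ (t : ℝ) := by exact_mod_cast ht2
    rw [hmUr, hnUr] at hkey
    nlinarith
  refine ⟨ht, hconn, ?_⟩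
  have ht1r : (t : ℝ) = 1 := by exact_mod_cast ht
  rw [hdU, hmUr, hnUr, ht1r, div_eq_iff (by linarith)]
  ring

lemma aux_lemma [Fintype V] (G : SimpleGraph V) (hg : 1 ≤ fracArboricity G) :
    ∀ n : ℕ, ∀ (ι : Type) [Fintype ι] [Nonempty ι], Fintype.card ι = n →
    ∀ H : ι → G.Subgraph, (∀ i, IsDensest G (H i)) →
    (∀ i j, i ≠ j → (H i).edgeSet ∩ (H j).edgeSet = ∅) →
    {v : V | ∃ i j, i ≠ j ∧ v ∈ (H i).verts ∧ v ∈ (H j).verts}.ncard < n := by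
  intro n
  induction n using Nat.strong_induction_on with
  | _ n IH =>
  intro ι _ _ hcard H hd hdisj
  classical
  have hnpos : 0 < n := hcard ▸ Fintype.card_pos
  by_cases hov : ∃ i j : ι, i ≠ j ∧ ((H i).verts ∩ (H j).verts).Nonempty
  · obtain ⟨i, j, hij, hvij⟩ := hov
    obtain ⟨ht1, hdU⟩ := overlap_lemma G hg (hd i) (hd j) (hdisj i j hij) hvij
    have hn2 : 2 ≤ n := by
      have : Nontrivial ι := ⟨⟨i, j, hij⟩⟩
      rw [← hcard]
      exact Fintype.one_lt_card
    set κ := {k : ι // k ≠ i ∧ k ≠ j} with hκ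
    have hcardκ : Fintype.card κ = n - 2 := by
      have e1 : Fintype.card κ = Fintype.card {k : ι // ¬(k = i ∨ k = j)} := by
        apply Fintype.card_congr
        apply Equiv.subtypeEquivRight
        intro k
        tauto
      have e2 : Fintype.card {k : ι // k = i ∨ k = j} = 2 := by
        rw [Fintype.card_subtype]
        have : (Finset.univ.filter (fun k : ι => k = i ∨ k = j)) = {i, j} := by
          ext k
          simp [Finset.mem_insert]
        rw [this, Finset.card_insert_of_notMem (by simpa using hij), Finset.card_singleton]
      rw [e1, Fintype.card_subtype_compl, e2, hcard]
    have hcard' : Fintype.card (Option κ) = n - 1 := by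
      rw [Fintype.card_option, hcardκ]
      omega
    set H' : Option κ → G.Subgraph :=
      fun o => o.elim (H i ⊔ H j) (fun k => H k.1) with hH'
    have hd' : ∀ o, IsDensest G (H' o) := by
      rintro (_ | k)
      · exact hdU
      · exact hd k.1
    have hdisj' : ∀ o p, o ≠ p → (H' o).edgeSet ∩ (H' p).edgeSet = ∅ := by
      rintro (_ | k) (_ | l) hop
      · exact absurd rfl hop
      · show ((H i ⊔ H j).edgeSet) ∩ (H l.1).edgeSet = ∅
        rw [SimpleGraph.Subgraph.edgeSet_sup, Set.union_inter_distrib_right,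
          hdisj i l.1 (Ne.symm l.2.1), hdisj j l.1 (Ne.symm l.2.2), Set.union_empty]
      · show (H k.1).edgeSet ∩ ((H i ⊔ H j).edgeSet) = ∅
        rw [SimpleGraph.Subgraph.edgeSet_sup, Set.inter_union_distrib_left,
          hdisj k.1 i k.2.1, hdisj k.1 j k.2.2, Set.union_empty]
      · refine hdisj k.1 l.1 ?_
        intro h
        exact hop (by rw [Subtype.ext h])
    set S' := {v : V | ∃ o p : Option κ, o ≠ p ∧ v ∈ (H' o).verts ∧ v ∈ (H' p).verts} with hS'
    have hS'card : S'.ncard < n - 1 := IH (n - 1) (by omega) (Option κ) hcard' H' hd' hdisj'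
    -- the original shared set is contained in S' ∪ (Vi ∩ Vj)
    have hsub : {v : V | ∃ a b : ι, a ≠ b ∧ v ∈ (H a).verts ∧ v ∈ (H b).verts}
        ⊆ S' ∪ ((H i).verts ∩ (H j).verts) := by
      rintro v ⟨a, b, hab, hva, hvb⟩
      set f : ι → Option κ := fun k =>
        if h : k = i ∨ k = j then none else some ⟨k, by tauto⟩ with hf
      have hmem : ∀ (k : ι), v ∈ (H k).verts → v ∈ (H' (f k)).verts := by
        intro k hv
        by_cases h : k = i ∨ k = j
        · simp only [hf, dif_pos h]
          show v ∈ (H i ⊔ H j).verts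
          rw [SimpleGraph.Subgraph.verts_sup]
          rcases h with rfl | rfl
          · exact Or.inl hv
          · exact Or.inr hv
        · simp only [hf, dif_neg h]
          exact hv
      by_cases ha : a = i ∨ a = j
      · by_cases hb : b = i ∨ b = j
        · right
          rcases ha with rfl | rfl <;> rcases hb with rfl | rfl
          · exact absurd rfl hab
          · exact ⟨hva, hvb⟩
          · exact ⟨hvb, hva⟩
          · exact absurd rfl hab
        · left
          refine ⟨f a, f b, ?_, hmem a hva, hmem b hvb⟩
          simp only [hf, dif_pos ha, dif_neg hb]
          exact fun h => by cases h
      · by_cases hb : b = i ∨ b = j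
        · left
          refine ⟨f a, f b, ?_, hmem a hva, hmem b hvb⟩
          simp only [hf, dif_neg ha, dif_pos hb]
          exact fun h => by cases h
        · left
          refine ⟨f a, f b, ?_, hmem a hva, hmem b hvb⟩
          simp only [hf, dif_neg ha, dif_neg hb, Ne, Option.some.injEq]
          exact fun h => hab (congrArg Subtype.val h)
    calc {v : V | ∃ a b : ι, a ≠ b ∧ v ∈ (H a).verts ∧ v ∈ (H b).verts}.ncard
        ≤ (S' ∪ ((H i).verts ∩ (H j).verts)).ncard :=
          Set.ncard_le_ncard hsub (Set.toFinite _)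
      _ ≤ S'.ncard + ((H i).verts ∩ (H j).verts).ncard := Set.ncard_union_le _ _
      _ = S'.ncard + 1 := by rw [ht1]
      _ < n := by omega
  · push_neg at hov
    have : {v : V | ∃ i j : ι, i ≠ j ∧ v ∈ (H i).verts ∧ v ∈ (H j).verts} = ∅ := by
      rw [Set.eq_empty_iff_forall_notMem]
      rintro v ⟨i, j, hij, h1, h2⟩
      have h0 := hov i j hij
      rw [Set.eq_empty_iff_forall_notMem] at h0
      exact h0 v ⟨h1, h2⟩
    rw [this, Set.ncard_empty]
    exact hnpos


lemma subsingleton_of_connected_no_edge (G : SimpleGraph V) (hG : G.Connected)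
    (hno : ∀ a b : V, ¬ G.Adj a b) : Subsingleton V := by
  constructor
  intro a b
  obtain ⟨w⟩ := hG.preconnected a b
  cases w with
  | nil => rfl
  | cons h _ => exact absurd h (hno _ _)

/-- cycle-free property: the number of vertices shared between pairs of
pairwise edge-disjoint minimal densest subgraphs H1,…,Hr is strictly less than r. -/
theorem minimalDensest_cycle_free [Fintype V] (G : SimpleGraph V) (hG : G.Connected)
    (r : ℕ) (hr : 0 < r) (H : Fin r → G.Subgraph)
    (hmin : ∀ i, IsMinimalDensest G (H i))
    (hdisj : ∀ i j, i ≠ j → (H i).edgeSet ∩ (H j).edgeSet = ∅) :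
    {v : V | ∃ i j, i ≠ j ∧ v ∈ (H i).verts ∧ v ∈ (H j).verts}.ncard < r := by
  classical
  rcases eq_or_lt_of_le (show 1 ≤ r from hr) with h1 | h2
  · -- r = 1 : no pair of distinct indices exists
    have hempty : {v : V | ∃ i j, i ≠ j ∧ v ∈ (H i).verts ∧ v ∈ (H j).verts} = ∅ := by
      rw [Set.eq_empty_iff_forall_notMem]
      rintro v ⟨i, j, hij, -, -⟩
      apply hij
      apply Fin.ext
      have hi := i.isLt
      have hj := j.isLt
      omega
    rw [hempty, Set.ncard_empty]
    exact hr
  · by_cases hadj : ∃ a b : V, G.Adj a b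
    · obtain ⟨a, b, hab⟩ := hadj
      have hg : 1 ≤ fracArboricity G := one_le_fracArboricity G hab
      have : Nonempty (Fin r) := ⟨⟨0, hr⟩⟩
      exact aux_lemma G hg r (Fin r) (Fintype.card_fin r) H (fun i => (hmin i).1) hdisj
    · push_neg at hadj
      have hsub : Subsingleton V := subsingleton_of_connected_no_edge G hG hadj
      have hle : {v : V | ∃ i j, i ≠ j ∧ v ∈ (H i).verts ∧ v ∈ (H j).verts}.ncard ≤ 1 := by
        calc {v : V | ∃ i j, i ≠ j ∧ v ∈ (H i).verts ∧ v ∈ (H j).verts}.ncard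
            ≤ (Set.univ : Set V).ncard :=
              Set.ncard_le_ncard (Set.subset_univ _) Set.finite_univ
          _ = Fintype.card V := by rw [Set.ncard_univ, Nat.card_eq_fintype_card]
          _ ≤ 1 := Fintype.card_le_one_iff_subsingleton.mpr hsub
      omega
end

section
/- For any core allocation x of the arboricity game with nonempty core, and any two edges e, f belonging to the same prime set P of the prime partition of G, we have x_e = x_f. -/
open scoped BigOperators

variable {V : Type*}

/-- A set of edges is a forest if the graph it spans is acyclic. -/
def IsForestEdgeSet (F : Set (Sym2 V)) : Prop :=
  (SimpleGraph.fromEdgeSet F).IsAcyclic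

/-- Arboricity of an edge set: minimum number of forests covering it. -/
noncomputable def arboricity (S : Set (Sym2 V)) : ℕ :=
  sInf {k : ℕ | ∃ F : Fin k → Set (Sym2 V),
    (∀ i, IsForestEdgeSet (F i)) ∧ S ⊆ ⋃ i, F i}

/-- A spanning tree of `G`, as a subgraph. -/
def IsSpanningTree (G : SimpleGraph V) (T : G.Subgraph) : Prop :=
  T.IsSpanning ∧ T.coe.IsTree

/-- Membership in the core of the arboricity game on `G`:
nonnegative, efficient, and no coalition pays more than its arboricity. -/
def inCore (G : SimpleGraph V) (x : Sym2 V → ℝ) : Prop :=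
  (∀ e, 0 ≤ x e) ∧ (∑ᶠ e ∈ G.edgeSet, x e) = (arboricity G.edgeSet : ℝ) ∧
    ∀ S : Set (Sym2 V), S ⊆ G.edgeSet → (∑ᶠ e ∈ S, x e) ≤ (arboricity S : ℝ)

section AuxLemmas

open SimpleGraph

lemma isAcyclic_anti {A B : SimpleGraph V} (h : A ≤ B) (hB : B.IsAcyclic) : A.IsAcyclic :=
  fun _v c hc => hB (c.mapLe h) (hc.mapLe h)

lemma isForestEdgeSet_anti {s t : Set (Sym2 V)} (h : s ⊆ t) (ht : IsForestEdgeSet t) :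
    IsForestEdgeSet s :=
  isAcyclic_anti (fromEdgeSet_mono h) ht

lemma isForestEdgeSet_singleton (g : Sym2 V) : IsForestEdgeSet {g} := by
  intro v c hc
  have h3 : 3 ≤ c.length := hc.three_le_length
  have hlen : c.edges.length = c.length := c.length_edges
  have hsub : ∀ h ∈ c.edges, h = g := by
    intro h hh
    have := c.edges_subset_edgeSet hh
    rw [edgeSet_fromEdgeSet] at this
    exact this.1
  have hnd : c.edges.Nodup := hc.edges_nodup
  rcases hE : c.edges with _ | ⟨a, _ | ⟨b, l⟩⟩
  · rw [hE] at hlen; simp at hlen; omega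
  · rw [hE] at hlen; simp at hlen; omega
  · have ha : a = g := hsub a (by rw [hE]; simp)
    have hb : b = g := hsub b (by rw [hE]; simp)
    rw [hE] at hnd
    simp [ha, hb] at hnd

lemma arboricity_le_one {s : Set (Sym2 V)} (hs : IsForestEdgeSet s) : arboricity s ≤ 1 :=
  Nat.sInf_le ⟨fun _ => s, fun _ => hs, by intro g hg; exact Set.mem_iUnion.2 ⟨0, hg⟩⟩

lemma arboricity_spec [Fintype V] (S : Set (Sym2 V)) :
    ∃ F : Fin (arboricity S) → Set (Sym2 V),
      (∀ i, IsForestEdgeSet (F i)) ∧ S ⊆ ⋃ i, F i := by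
  classical
  have hne : {k : ℕ | ∃ F : Fin k → Set (Sym2 V),
      (∀ i, IsForestEdgeSet (F i)) ∧ S ⊆ ⋃ i, F i}.Nonempty := by
    refine ⟨Fintype.card (Sym2 V), fun i => {(Fintype.equivFin (Sym2 V)).symm i}, ?_, ?_⟩
    · intro i; exact isForestEdgeSet_singleton _
    · intro g _
      exact Set.mem_iUnion.2 ⟨Fintype.equivFin (Sym2 V) g, by simp⟩
  exact Nat.sInf_mem hne

lemma reachable_of_insert_not_forest {s : Set (Sym2 V)} {p q : V}
    (hs : IsForestEdgeSet s) (hpq : p ≠ q)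
    (hins : ¬ IsForestEdgeSet (insert s(p, q) s)) :
    (SimpleGraph.fromEdgeSet s).Reachable p q := by
  unfold IsForestEdgeSet SimpleGraph.IsAcyclic at hins
  push_neg at hins
  obtain ⟨v, c, hc⟩ := hins
  by_cases hg : s(p, q) ∈ c.edges
  · have hadj : (fromEdgeSet (insert s(p, q) s)).Adj p q :=
      (fromEdgeSet_adj _).2 ⟨Set.mem_insert _ _, hpq⟩
    have := (adj_and_reachable_delete_edges_iff_exists_cycle.mpr ⟨v, c, hc, hg⟩).2
    refine this.mono ?_
    intro a b hab
    rw [deleteEdges, sdiff_adj, fromEdgeSet_adj, fromEdgeSet_adj] at hab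
    rw [fromEdgeSet_adj]
    obtain ⟨⟨hmem, hne⟩, hnot⟩ := hab
    rcases Set.mem_insert_iff.1 hmem with h | h
    · exact absurd ⟨h ▸ rfl, hne⟩ hnot
    · exact ⟨h, hne⟩
  · have hedges : ∀ h ∈ c.edges, h ∈ (fromEdgeSet s).edgeSet := by
      intro h hh
      have := c.edges_subset_edgeSet hh
      rw [edgeSet_fromEdgeSet] at this ⊢
      rcases Set.mem_insert_iff.1 this.1 with h1 | h1
      · exact absurd (h1 ▸ hh) hg
      · exact ⟨h1, this.2⟩
    exact absurd (hc.transfer hedges) (hs _)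

lemma liftW {G : SimpleGraph V} (H : G.Subgraph) (A : SimpleGraph V)
    (hA : ∀ {a b : V}, A.Adj a b → a ∈ H.verts → b ∈ H.verts)
    (hA2 : ∀ {a b : V} (h : A.Adj a b) (ha : a ∈ H.verts) (hb : b ∈ H.verts),
      H.coe.Reachable ⟨a, ha⟩ ⟨b, hb⟩) :
    ∀ {a b : V} (_w : A.Walk a b) (ha : a ∈ H.verts) (hb : b ∈ H.verts),
      H.coe.Reachable ⟨a, ha⟩ ⟨b, hb⟩ := by
  intro a b w
  induction w with
  | nil => intro ha hb; exact Reachable.refl _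
  | cons h p ih =>
    intro ha hb
    exact (hA2 h ha (hA h ha)).trans (ih (hA h ha) hb)

end AuxLemmas

set_option maxHeartbeats 1000000

/-- edges in the same prime set (characterized by the generalized
noncrossing property with respect to densest subgraphs) receive the same value in
every core allocation. -/
theorem core_constant_on_prime_set [Fintype V] (G : SimpleGraph V) (hG : G.Connected)
    (hcore : fracArboricity G = (arboricity G.edgeSet : ℝ))
    (P : Set (Sym2 V)) (hPE : P ⊆ G.edgeSet)
    (hP : ∀ H : G.Subgraph, IsDensest G H → P ⊆ H.edgeSet ∨ P ∩ H.edgeSet = ∅)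
    (x : Sym2 V → ℝ) (hx : inCore G x) (e f : Sym2 V) (he : e ∈ P) (hf : f ∈ P) :
    x e = x f := by
  classical
  obtain ⟨hx0, hxEff, hxSub⟩ := hx
  suffices key : ∀ e f : Sym2 V, e ∈ P → f ∈ P → x f < x e → False by
    rcases lt_trichotomy (x e) (x f) with h | h | h
    · exact (key f e hf he h).elim
    · exact h
    · exact (key e f he hf h).elim
  clear he hf
  clear e f
  intro e f he hf hef
  set tofin : Set (Sym2 V) → Finset (Sym2 V) :=
    fun S => Finset.univ.filter (fun g => g ∈ S) with htofdef
  have htof : ∀ (S : Set (Sym2 V)) (g : Sym2 V), g ∈ tofin S ↔ g ∈ S := by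
    intro S g; rw [htofdef]; simp
  set msum : Set (Sym2 V) → ℝ := fun S => ∑ g ∈ tofin S, x g with hmsumdef
  have hconv : ∀ S : Set (Sym2 V), (∑ᶠ g ∈ S, x g) = msum S := by
    intro S
    rw [hmsumdef]
    dsimp only
    rw [← finsum_mem_coe_finset]
    congr 1
    ext g
    rw [Finset.mem_coe, htof]
  have hncard : ∀ S : Set (Sym2 V), S.ncard = (tofin S).card := by
    intro S
    rw [show S = ((tofin S : Finset (Sym2 V)) : Set (Sym2 V)) by
      ext g; rw [Finset.mem_coe, htof]]
    rw [Set.ncard_coe_finset]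
    congr 1
    ext g
    simp only [Finset.mem_coe, htof]
  have hmsum_mono : ∀ S T : Set (Sym2 V), S ⊆ T → msum S ≤ msum T := by
    intro S T hST
    rw [hmsumdef]
    refine Finset.sum_le_sum_of_subset_of_nonneg ?_ (fun g _ _ => hx0 g)
    intro g hg
    rw [htof] at hg ⊢
    exact hST hg
  have hmsum_insert : ∀ (S : Set (Sym2 V)) (g : Sym2 V), g ∉ S →
      msum (insert g S) = x g + msum S := by
    intro S g hg
    rw [hmsumdef]
    dsimp only
    rw [show tofin (insert g S) = insert g (tofin S) by
      ext h; rw [htof, Finset.mem_insert, Set.mem_insert_iff, htof]]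
    rw [Finset.sum_insert (by rw [htof]; exact hg)]
  have hmsum_sdiff : ∀ (S : Set (Sym2 V)) (g : Sym2 V), g ∈ S →
      msum (S \ {g}) = msum S - x g := by
    intro S g hg
    rw [hmsumdef]
    dsimp only
    rw [show tofin (S \ {g}) = (tofin S).erase g by
      ext h
      rw [htof, Finset.mem_erase, htof, Set.mem_diff, Set.mem_singleton_iff]
      tauto]
    exact Finset.sum_erase_eq_sub (by rw [htof]; exact hg)
  set a := arboricity G.edgeSet with ha
  obtain ⟨F0, hF0forest, hF0cover⟩ := arboricity_spec G.edgeSet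
  set Fi : Fin a → Set (Sym2 V) := fun i => F0 i ∩ G.edgeSet with hFidef
  have hFiE : ∀ i, Fi i ⊆ G.edgeSet := fun i => Set.inter_subset_right
  have hFiforest : ∀ i, IsForestEdgeSet (Fi i) :=
    fun i => isForestEdgeSet_anti Set.inter_subset_left (hF0forest i)
  have hFicover : ∀ g ∈ G.edgeSet, ∃ i, g ∈ Fi i := by
    intro g hg
    obtain ⟨i, hi⟩ := Set.mem_iUnion.1 (hF0cover hg)
    exact ⟨i, hi, hg⟩
  have hmsum_le_one : ∀ S : Set (Sym2 V), S ⊆ G.edgeSet → IsForestEdgeSet S →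
      msum S ≤ 1 := by
    intro S hSE hSf
    have h1 := hxSub S hSE
    rw [hconv] at h1
    refine h1.trans ?_
    exact_mod_cast arboricity_le_one hSf
  have hxE : msum G.edgeSet = (a : ℝ) := by rw [hconv] at hxEff; exact hxEff
  set cnt : Sym2 V → ℕ := fun g => (Finset.univ.filter (fun i => g ∈ Fi i)).card with hcnt
  have hFit : ∀ i, tofin (Fi i) = (tofin G.edgeSet).filter (fun g => g ∈ Fi i) := by
    intro i
    ext g
    rw [htof, Finset.mem_filter, htof]
    exact ⟨fun h => ⟨hFiE i h, h⟩, fun h => h.2⟩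
  have hdouble : ∑ i : Fin a, msum (Fi i)
      = ∑ g ∈ tofin G.edgeSet, (cnt g : ℝ) * x g := by
    rw [hmsumdef]
    dsimp only
    calc ∑ i : Fin a, ∑ g ∈ tofin (Fi i), x g
        = ∑ i : Fin a, ∑ g ∈ tofin G.edgeSet, if g ∈ Fi i then x g else 0 := by
          refine Finset.sum_congr rfl fun i _ => ?_
          rw [hFit i, Finset.sum_filter]
      _ = ∑ g ∈ tofin G.edgeSet, ∑ i : Fin a, if g ∈ Fi i then x g else 0 :=
          Finset.sum_comm
      _ = ∑ g ∈ tofin G.edgeSet, (cnt g : ℝ) * x g := by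
          refine Finset.sum_congr rfl fun g _ => ?_
          rw [← Finset.sum_filter, Finset.sum_const, hcnt]
          simp [nsmul_eq_mul]
  have hcnt1 : ∀ g ∈ G.edgeSet, 1 ≤ cnt g := by
    intro g hg
    obtain ⟨i, hi⟩ := hFicover g hg
    exact Finset.card_pos.2 ⟨i, by simp [hcnt, hi]⟩
  have hsum_le : ∑ g ∈ tofin G.edgeSet, (cnt g : ℝ) * x g ≤ (a : ℝ) := by
    rw [← hdouble]
    calc ∑ i : Fin a, msum (Fi i)
        ≤ ∑ _i : Fin a, (1 : ℝ) :=
          Finset.sum_le_sum fun i _ => hmsum_le_one (Fi i) (hFiE i) (hFiforest i)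
      _ = (a : ℝ) := by simp
  have hsum_ge : (a : ℝ) ≤ ∑ g ∈ tofin G.edgeSet, (cnt g : ℝ) * x g := by
    rw [← hxE, hmsumdef]
    dsimp only
    refine Finset.sum_le_sum fun g hg => ?_
    have hg' : g ∈ G.edgeSet := (htof _ g).1 hg
    exact le_mul_of_one_le_left (hx0 g) (by exact_mod_cast hcnt1 g hg')
  have heq : ∑ g ∈ tofin G.edgeSet, (cnt g : ℝ) * x g = (a : ℝ) :=
    le_antisymm hsum_le hsum_ge
  have hFtight : ∀ i, msum (Fi i) = 1 := by
    have h0 : ∑ i : Fin a, ((1 : ℝ) - msum (Fi i)) = 0 := by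
      rw [Finset.sum_sub_distrib, hdouble, heq]
      simp
    intro i
    have := (Finset.sum_eq_zero_iff_of_nonneg
      (fun j _ => sub_nonneg.2 (hmsum_le_one (Fi j) (hFiE j) (hFiforest j)))).1 h0 i
      (Finset.mem_univ i)
    linarith
  have hmult : ∀ g, 0 < x g → ∀ i j, g ∈ Fi i → g ∈ Fi j → i = j := by
    have h0 : ∑ g ∈ tofin G.edgeSet, ((cnt g : ℝ) * x g - x g) = 0 := by
      rw [Finset.sum_sub_distrib, heq]
      have : ∑ g ∈ tofin G.edgeSet, x g = msum G.edgeSet := by rw [hmsumdef]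
      rw [this, hxE]
      ring
    intro g hgpos i j hgi hgj
    by_contra hij
    have h2 : 2 ≤ cnt g := by
      apply Finset.one_lt_card.2
      exact ⟨i, by simp [hcnt, hgi], j, by simp [hcnt, hgj], hij⟩
    have hg' : g ∈ tofin G.edgeSet := (htof _ g).2 (hFiE i hgi)
    have hterm := (Finset.sum_eq_zero_iff_of_nonneg (fun h hh => ?_)).1 h0 g hg'
    · have hcg : (2 : ℝ) ≤ (cnt g : ℝ) := by exact_mod_cast h2
      nlinarith
    · have hh' : h ∈ G.edgeSet := (htof _ h).1 hh
      have : (1 : ℝ) ≤ (cnt h : ℝ) := by exact_mod_cast hcnt1 h hh'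
      nlinarith [hx0 h]
  -- threshold construction
  have hθpos : 0 < x e := lt_of_le_of_lt (hx0 f) hef
  have heE : e ∈ G.edgeSet := hPE he
  set Eθ : Set (Sym2 V) := {g | g ∈ G.edgeSet ∧ x e ≤ x g} with hEθdef
  have heEθ : e ∈ Eθ := ⟨heE, le_refl _⟩
  set Gθ := SimpleGraph.fromEdgeSet Eθ with hGθdef
  obtain ⟨u₀, v₀, he'⟩ : ∃ u v, e = s(u, v) := by
    induction e using Sym2.ind with | _ u v => exact ⟨u, v, rfl⟩
  have hadj₀ : G.Adj u₀ v₀ := G.mem_edgeSet.1 (he' ▸ heE)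
  have hne₀ : u₀ ≠ v₀ := hadj₀.ne
  have hGθadj₀ : Gθ.Adj u₀ v₀ := (SimpleGraph.fromEdgeSet_adj _).2 ⟨he' ▸ heEθ, hne₀⟩
  set K : Set V := {v | Gθ.Reachable u₀ v} with hKdef
  have hu₀K : u₀ ∈ K := by rw [hKdef]; exact SimpleGraph.Reachable.refl _
  have hKer : ∀ {p q : V}, Gθ.Adj p q → p ∈ K → q ∈ K := by
    intro p q hpq hp
    rw [hKdef] at hp ⊢
    exact hp.trans hpq.reachable
  have hv₀K : v₀ ∈ K := hKer hGθadj₀ hu₀K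
  set D : G.Subgraph :=
    { verts := K
      Adj := fun p q => Gθ.Adj p q ∧ p ∈ K ∧ q ∈ K
      adj_sub := by
        intro p q hpq
        have h1 := (SimpleGraph.fromEdgeSet_adj _).1 hpq.1
        exact G.mem_edgeSet.1 h1.1.1
      edge_vert := by intro p q hpq; exact hpq.2.1
      symm := by
        refine ⟨fun p q hpq => ?_⟩
        exact ⟨hpq.1.symm, hpq.2.2, hpq.2.1⟩ } with hDdef
  have hDedge : ∀ {g : Sym2 V}, g ∈ D.edgeSet → g ∈ Eθ := by
    intro g
    induction g using Sym2.ind with | _ p q =>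
      intro hg
      have hadj : D.Adj p q := SimpleGraph.Subgraph.mem_edgeSet.1 hg
      exact ((SimpleGraph.fromEdgeSet_adj _).1 hadj.1).1
  have heD : e ∈ D.edgeSet := by
    rw [he']
    exact SimpleGraph.Subgraph.mem_edgeSet.2 ⟨hGθadj₀, hu₀K, hv₀K⟩
  have hDverts : D.verts = K := by rw [hDdef]
  have hDconn : D.Connected := by
    rw [SimpleGraph.Subgraph.connected_iff']
    rw [SimpleGraph.connected_iff]
    constructor
    · rintro ⟨p, hp⟩ ⟨q, hq⟩
      rw [hDverts] at hp hq
      have hp' : Gθ.Reachable u₀ p := hp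
      have hq' : Gθ.Reachable u₀ q := hq
      refine (hp'.symm.trans hq').elim fun w => ?_
      have := liftW D Gθ (fun h ha => by
          rw [hDverts] at ha ⊢
          exact hKer h ha)
        (fun {c d} h hc hd => SimpleGraph.Adj.reachable (by
          rw [SimpleGraph.Subgraph.coe_adj]
          have hc' : c ∈ K := by rw [← hDverts]; exact hc
          have hd' : d ∈ K := by rw [← hDverts]; exact hd
          exact ⟨h, hc', hd'⟩))
        w (by rw [hDverts]; exact hp) (by rw [hDverts]; exact hq)
      exact this
    · exact ⟨⟨u₀, by rw [hDverts]; exact hu₀K⟩⟩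
  have hbdd : BddAbove {d : ℝ | ∃ H : G.Subgraph, H.Connected ∧ d = density G H} := by
    refine ⟨(Fintype.card (Sym2 V) : ℝ), ?_⟩
    rintro d ⟨H, -, rfl⟩
    have hm : (H.edgeSet.ncard : ℝ) ≤ (Fintype.card (Sym2 V) : ℝ) := by
      have := Set.ncard_le_ncard (Set.subset_univ H.edgeSet) Set.finite_univ
      rw [Set.ncard_univ, Nat.card_eq_fintype_card] at this
      exact_mod_cast this
    have hM0 : (0 : ℝ) ≤ (Fintype.card (Sym2 V) : ℝ) := Nat.cast_nonneg _
    rcases le_or_gt H.verts.ncard 1 with h1 | h1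
    · rcases Nat.le_one_iff_eq_zero_or_eq_one.1 h1 with h0 | h0
      · rw [density, h0]
        refine le_trans ?_ hM0
        exact div_nonpos_iff.2 (Or.inl ⟨Nat.cast_nonneg _, by norm_num⟩)
      · rw [density, h0]
        norm_num
    · rw [density]
      refine le_trans (div_le_self (Nat.cast_nonneg _) ?_) hm
      have : (2 : ℝ) ≤ (H.verts.ncard : ℝ) := by exact_mod_cast h1
      linarith
  have hK2 : 2 ≤ K.ncard := by
    have hsub2 : ({u₀, v₀} : Set V) ⊆ K := by
      intro v hv
      rcases hv with hv | hv
      · exact hv ▸ hu₀K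
      · exact hv ▸ hv₀K
    have := Set.ncard_le_ncard hsub2 (Set.toFinite K)
    rwa [Set.ncard_pair hne₀] at this
  have hTree : ∀ i : Fin a, (Fi i ∩ D.edgeSet).ncard = K.ncard - 1 := by
    intro i
    set A := SimpleGraph.fromEdgeSet (Fi i) with hAdef
    have hAacyc : A.IsAcyclic := hFiforest i
    set T : G.Subgraph :=
      { verts := K
        Adj := fun p q => (Gθ.Adj p q ∧ p ∈ K ∧ q ∈ K) ∧ s(p, q) ∈ Fi i
        adj_sub := by
          intro p q hpq
          exact D.adj_sub (show D.Adj p q by rw [hDdef]; exact hpq.1)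
        edge_vert := by intro p q hpq; exact hpq.1.2.1
        symm := by
          refine ⟨fun p q hpq => ?_⟩
          refine ⟨⟨hpq.1.1.symm, hpq.1.2.2, hpq.1.2.1⟩, ?_⟩
          rw [Sym2.eq_swap]
          exact hpq.2 } with hTdef
    have hTverts : T.verts = K := by rw [hTdef]
    have hTadj : ∀ {p q : V}, T.Adj p q ↔ ((Gθ.Adj p q ∧ p ∈ K ∧ q ∈ K) ∧ s(p, q) ∈ Fi i) := by
      intro p q; rw [hTdef]
    have hDadj : ∀ {p q : V}, D.Adj p q ↔ (Gθ.Adj p q ∧ p ∈ K ∧ q ∈ K) := by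
      intro p q; rw [hDdef]
    -- the key claim: endpoints of any D-edge are connected inside T
    have claim : ∀ {p q : V} (hpq : D.Adj p q) (hp : p ∈ T.verts) (hq : q ∈ T.verts),
        T.coe.Reachable ⟨p, hp⟩ ⟨q, hq⟩ := by
      intro p q hpq hp hq
      have hpq' := hDadj.1 hpq
      have hgE : s(p, q) ∈ Eθ := hDedge (SimpleGraph.Subgraph.mem_edgeSet.2 hpq)
      have hpqne : p ≠ q := (D.adj_sub hpq).ne
      have hgxe : x e ≤ x s(p, q) := hgE.2
      have hgG : s(p, q) ∈ G.edgeSet := hgE.1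
      by_cases hgFi : s(p, q) ∈ Fi i
      · refine SimpleGraph.Adj.reachable ?_
        rw [SimpleGraph.Subgraph.coe_adj, hTadj]
        exact ⟨hpq', hgFi⟩
      · by_cases hins : IsForestEdgeSet (insert s(p, q) (Fi i))
        · exfalso
          have hsubE : insert s(p, q) (Fi i) ⊆ G.edgeSet := by
            intro g hg
            rcases Set.mem_insert_iff.1 hg with rfl | hg
            · exact hgG
            · exact hFiE i hg
          have hb := hmsum_le_one _ hsubE hins
          rw [hmsum_insert _ _ hgFi, hFtight i] at hb
          linarith
        · have hreach : A.Reachable p q :=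
            reachable_of_insert_not_forest (hFiforest i) hpqne hins
          obtain ⟨w⟩ := hreach
          set wp : A.Path p q := w.toPath with hwpdef
          by_cases hall : ∀ h ∈ (wp : A.Walk p q).edges, x e ≤ x h
          · -- lift the path into T
            have hedges : ∀ h ∈ (wp : A.Walk p q).edges,
                h ∈ (SimpleGraph.fromEdgeSet {h | h ∈ Fi i ∧ h ∈ Eθ}).edgeSet := by
              intro h hh
              have h1 := (wp : A.Walk p q).edges_subset_edgeSet hh
              rw [hAdef, SimpleGraph.edgeSet_fromEdgeSet] at h1
              rw [SimpleGraph.edgeSet_fromEdgeSet]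
              exact ⟨⟨h1.1, hFiE i h1.1, hall h hh⟩, h1.2⟩
            refine liftW T (SimpleGraph.fromEdgeSet {h | h ∈ Fi i ∧ h ∈ Eθ})
              ?_ ?_ ((wp : A.Walk p q).transfer _ hedges) hp hq
            · intro c d hcd hc
              have h1 := (SimpleGraph.fromEdgeSet_adj _).1 hcd
              have hGθcd : Gθ.Adj c d := by
                rw [hGθdef, SimpleGraph.fromEdgeSet_adj]
                exact ⟨h1.1.2, h1.2⟩
              rw [hTverts] at hc ⊢
              exact hKer hGθcd hc
            · intro c d hcd hc hd
              have h1 := (SimpleGraph.fromEdgeSet_adj _).1 hcd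
              have hGθcd : Gθ.Adj c d := by
                rw [hGθdef, SimpleGraph.fromEdgeSet_adj]
                exact ⟨h1.1.2, h1.2⟩
              refine SimpleGraph.Adj.reachable ?_
              rw [SimpleGraph.Subgraph.coe_adj, hTadj]
              have hc' : c ∈ K := by rw [← hTverts]; exact hc
              have hd' : d ∈ K := by rw [← hTverts]; exact hd
              exact ⟨⟨hGθcd, hc', hd'⟩, h1.1.1⟩
          · exfalso
            push_neg at hall
            obtain ⟨e', he'w, he'x⟩ := hall
            have he'A := (wp : A.Walk p q).edges_subset_edgeSet he'w
            rw [hAdef, SimpleGraph.edgeSet_fromEdgeSet] at he'A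
            have he'Fi : e' ∈ Fi i := he'A.1
            -- p,q are not reachable after deleting e'
            have hnr : ¬ (SimpleGraph.fromEdgeSet (Fi i \ {e'})).Reachable p q := by
              intro hre
              obtain ⟨w2⟩ := hre
              set wq := w2.toPath with hwqdef
              have hsub : ∀ h ∈ (wq : (SimpleGraph.fromEdgeSet (Fi i \ {e'})).Walk p q).edges,
                  h ∈ A.edgeSet := by
                intro h hh
                have h1 := (wq : (SimpleGraph.fromEdgeSet (Fi i \ {e'})).Walk p q).edges_subset_edgeSet hh
                rw [SimpleGraph.edgeSet_fromEdgeSet] at h1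
                rw [hAdef, SimpleGraph.edgeSet_fromEdgeSet]
                exact ⟨h1.1.1, h1.2⟩
              set wq' : A.Path p q :=
                ⟨(wq : (SimpleGraph.fromEdgeSet (Fi i \ {e'})).Walk p q).transfer A hsub,
                  SimpleGraph.Walk.IsPath.transfer hsub wq.2⟩ with hwq'def
              have hpeq : wp = wq' := hAacyc.path_unique wp wq'
              rw [hpeq] at he'w
              have he'in : e' ∈ (wq : (SimpleGraph.fromEdgeSet (Fi i \ {e'})).Walk p q).edges := by
                have := he'w
                rw [hwq'def] at this
                simpa [SimpleGraph.Walk.edges_transfer] using this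
              have h2 := (wq : (SimpleGraph.fromEdgeSet (Fi i \ {e'})).Walk p q).edges_subset_edgeSet he'in
              rw [SimpleGraph.edgeSet_fromEdgeSet] at h2
              exact h2.1.2 rfl
            have hforest2 : IsForestEdgeSet (insert s(p, q) (Fi i \ {e'})) := by
              by_contra hcon
              exact hnr (reachable_of_insert_not_forest
                (isForestEdgeSet_anti Set.diff_subset (hFiforest i)) hpqne hcon)
            have hsubE2 : insert s(p, q) (Fi i \ {e'}) ⊆ G.edgeSet := by
              intro g hg
              rcases Set.mem_insert_iff.1 hg with rfl | hg
              · exact hgG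
              · exact hFiE i hg.1
            have hle2 := hmsum_le_one _ hsubE2 hforest2
            have hgnotin : s(p, q) ∉ Fi i \ {e'} := fun h => hgFi h.1
            rw [hmsum_insert _ _ hgnotin, hmsum_sdiff _ _ he'Fi, hFtight i] at hle2
            linarith
    -- T is connected
    have hTconn : T.coe.Connected := by
      rw [SimpleGraph.connected_iff]
      constructor
      · rintro ⟨p, hp⟩ ⟨q, hq⟩
        have hp' : Gθ.Reachable u₀ p := by rw [hTverts] at hp; exact hp
        have hq' : Gθ.Reachable u₀ q := by rw [hTverts] at hq; exact hq
        refine (hp'.symm.trans hq').elim fun w => ?_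
        refine liftW T Gθ (fun h hc => by
            rw [hTverts] at hc ⊢
            exact hKer h hc)
          (fun {c d} h hc hd => ?_) w hp hq
        have hc' : c ∈ K := by rw [← hTverts]; exact hc
        have hd' : d ∈ K := by rw [← hTverts]; exact hd
        exact claim (hDadj.2 ⟨h, hc', hd'⟩) hc hd
      · exact ⟨⟨u₀, by rw [hTverts]; exact hu₀K⟩⟩
    -- T is acyclic
    have hTacyc : T.coe.IsAcyclic := by
      intro v c hc
      have hφadj : ∀ {α β : ↥T.verts}, T.coe.Adj α β → A.Adj ↑α ↑β := by
        intro α β hαβ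
        rw [SimpleGraph.Subgraph.coe_adj, hTadj] at hαβ
        rw [hAdef, SimpleGraph.fromEdgeSet_adj]
        exact ⟨hαβ.2, hαβ.1.1.ne⟩
      have := hAacyc (c.map ⟨Subtype.val, hφadj⟩)
        (hc.map Subtype.val_injective)
      exact this
    -- counting
    haveI : Fintype ↥(T.verts) := Fintype.ofFinite _
    haveI : Fintype ↥(T.coe.edgeSet) := Fintype.ofFinite _
    have htreecard := SimpleGraph.IsTree.card_edgeFinset ⟨hTconn, hTacyc⟩
    have himg : Sym2.map (Subtype.val : ↥T.verts → V) '' T.coe.edgeSet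
        = Fi i ∩ D.edgeSet := by
      ext g
      constructor
      · rintro ⟨g', hg', rfl⟩
        induction g' using Sym2.ind with | _ α β =>
          have hαβ := T.coe.mem_edgeSet.1 hg'
          rw [SimpleGraph.Subgraph.coe_adj, hTadj] at hαβ
          refine ⟨hαβ.2, ?_⟩
          rw [Sym2.map_pair_eq]
          exact SimpleGraph.Subgraph.mem_edgeSet.2 (hDadj.2 hαβ.1)
      · intro hg
        induction g using Sym2.ind with | _ p q =>
          have hDpq : D.Adj p q := SimpleGraph.Subgraph.mem_edgeSet.1 hg.2
          have hpq' := hDadj.1 hDpq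
          have hpT : p ∈ T.verts := by rw [hTverts]; exact hpq'.2.1
          have hqT : q ∈ T.verts := by rw [hTverts]; exact hpq'.2.2
          refine ⟨s(⟨p, hpT⟩, ⟨q, hqT⟩), T.coe.mem_edgeSet.2 ?_, by rw [Sym2.map_pair_eq]⟩
          rw [SimpleGraph.Subgraph.coe_adj, hTadj]
          exact ⟨hpq', hg.1⟩
    have hcard1 : (Fi i ∩ D.edgeSet).ncard = T.coe.edgeSet.ncard := by
      rw [← himg, Set.ncard_image_of_injective _ (Sym2.map.injective Subtype.val_injective)]
    have hcard2 : T.coe.edgeSet.ncard = T.coe.edgeFinset.card := by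
      rw [SimpleGraph.edgeFinset, Set.ncard_eq_toFinset_card']
    have hcard3 : Fintype.card ↥T.verts = K.ncard := by
      rw [← Nat.card_eq_fintype_card, show (T.verts : Set V) = K from hTverts]
      exact Nat.card_coe_set_eq K
    omega
  have hDversE : ∀ {g : Sym2 V}, g ∈ D.edgeSet → g ∈ G.edgeSet := by
    intro g hg
    exact (hDedge hg).1
  have hEDcard : a * (K.ncard - 1) ≤ D.edgeSet.ncard := by
    have hdisjF : ∀ i j : Fin a, i ≠ j →
        Disjoint (tofin (Fi i ∩ D.edgeSet)) (tofin (Fi j ∩ D.edgeSet)) := by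
      intro i j hij
      rw [Finset.disjoint_left]
      intro g hgi hgj
      rw [htof] at hgi hgj
      have hgpos : 0 < x g := lt_of_lt_of_le hθpos (hDedge hgi.2).2
      exact hij (hmult g hgpos i j hgi.1 hgj.1)
    have hcard_eq : ∀ i : Fin a, (tofin (Fi i ∩ D.edgeSet)).card = K.ncard - 1 := by
      intro i
      rw [← hncard, hTree i]
    have hsubun : (Finset.univ : Finset (Fin a)).biUnion
        (fun i => tofin (Fi i ∩ D.edgeSet)) ⊆ tofin D.edgeSet := by
      intro g hg
      rw [Finset.mem_biUnion] at hg
      obtain ⟨i, _, hgi⟩ := hg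
      rw [htof] at hgi ⊢
      exact hgi.2
    calc a * (K.ncard - 1) = ∑ i : Fin a, (tofin (Fi i ∩ D.edgeSet)).card := by
          rw [Finset.sum_congr rfl fun i _ => hcard_eq i]
          simp [Finset.sum_const, mul_comm]
      _ = ((Finset.univ : Finset (Fin a)).biUnion
            (fun i => tofin (Fi i ∩ D.edgeSet))).card :=
          (Finset.card_biUnion (fun i _ j _ hij => hdisjF i j hij)).symm
      _ ≤ (tofin D.edgeSet).card := Finset.card_le_card hsubun
      _ = D.edgeSet.ncard := (hncard _).symm
  have hDdensest : IsDensest G D := by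
    refine ⟨hDconn, ?_⟩
    have hle : density G D ≤ fracArboricity G :=
      le_csSup hbdd ⟨D, hDconn, rfl⟩
    have hge : (a : ℝ) ≤ density G D := by
      rw [density, hDverts]
      have hden1 : (1 : ℝ) ≤ (K.ncard : ℝ) - 1 := by
        have : (2 : ℝ) ≤ (K.ncard : ℝ) := by exact_mod_cast hK2
        linarith
      have hdenpos : (0 : ℝ) < (K.ncard : ℝ) - 1 := by linarith
      rw [le_div_iff₀ hdenpos]
      have : ((a * (K.ncard - 1) : ℕ) : ℝ) ≤ (D.edgeSet.ncard : ℝ) := by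
        exact_mod_cast hEDcard
      have hcast : ((a * (K.ncard - 1) : ℕ) : ℝ) = (a : ℝ) * ((K.ncard : ℝ) - 1) := by
        rw [Nat.cast_mul, Nat.cast_sub (by omega : 1 ≤ K.ncard)]
        norm_num
      linarith [hcast ▸ this]
    rw [hcore]
    exact le_antisymm (hcore ▸ hle) hge
  rcases hP D hDdensest with hsub | hdisj
  · have hfD : f ∈ D.edgeSet := hsub hf
    have : x e ≤ x f := (hDedge hfD).2
    linarith
  · have : e ∈ P ∩ D.edgeSet := ⟨he, heD⟩
    rw [hdisj] at this
    exact this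
end
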